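/- Let n ≥ 1 and let Λ be a module over R(n) = ℤ[X]/(X^n − 1) whose underlying abelian group is finitely generated and torsion-free. For each positive divisor d of n set Λ_d := {λ ∈ Λ : Φ_d(X)·λ = 0}, the kernel of multiplication by Φ_d. Then the submodules Λ_d for d ∣ n are independent (their sum is a direct sum ⊕_{d ∣ n} Λ_d inside Λ), and the quotient abelian group Λ^0 := Λ / (⊕_{d ∣ n} Λ_d) is finite. -/

import Mathlib

open Polynomial

lemma rat_denom (u : ℚ[X]) :
    ∃ (m : ℤ) (a : ℤ[X]), m ≠ 0 ∧ a.map (Int.castRingHom ℚ) = C (m : ℚ) * u := by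
  obtain ⟨b, hb⟩ := IsLocalization.integerNormalization_map_to_map (nonZeroDivisors ℤ) u
  refine ⟨(b : ℤ), IsLocalization.integerNormalization (nonZeroDivisors ℤ) u,
    nonZeroDivisors.coe_ne_zero b, ?_⟩
  have : (algebraMap ℤ ℚ) = Int.castRingHom ℚ := by ext; simp
  rw [← this, hb]
  ext i
  simp [Polynomial.coeff_smul, zsmul_eq_mul]

lemma map_int_inj : Function.Injective (Polynomial.map (Int.castRingHom ℚ)) :=
  Polynomial.map_injective _ fun a b h => by simpa using h

lemma int_bezout (p q : ℤ[X])
    (h : IsCoprime (p.map (Int.castRingHom ℚ)) (q.map (Int.castRingHom ℚ))) :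
    ∃ (m : ℤ) (a b : ℤ[X]), m ≠ 0 ∧ a * p + b * q = C m := by
  obtain ⟨u, v, huv⟩ := h
  obtain ⟨m₁, a, hm₁, ha⟩ := rat_denom u
  obtain ⟨m₂, b, hm₂, hb⟩ := rat_denom v
  refine ⟨m₁ * m₂, C m₂ * a, C m₁ * b, mul_ne_zero hm₁ hm₂, map_int_inj ?_⟩
  simp only [Polynomial.map_add, Polynomial.map_mul, Polynomial.map_intCast, map_C,
    eq_intCast, Polynomial.C_eq_intCast, ha, hb]
  push_cast
  linear_combination ((m₁ : ℚ[X]) * (m₂ : ℚ[X])) * huv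

lemma int_bezout_family (t : Finset ℕ) (ht : t.Nonempty) (s : ℕ → ℤ[X])
    (h : Pairwise (Function.onFun IsCoprime fun i : t => (s i).map (Int.castRingHom ℚ))) :
    ∃ (m : ℤ) (b : ℕ → ℤ[X]), m ≠ 0 ∧
      (∑ i ∈ t, b i * ∏ j ∈ t \ {i}, s j) = C m := by
  obtain ⟨μ, hμ⟩ := (exists_sum_eq_one_iff_pairwise_coprime
    (s := fun j => (s j).map (Int.castRingHom ℚ)) ht).mpr h
  choose m a hm ha using fun i => rat_denom (μ i)
  refine ⟨∏ i ∈ t, m i, fun i => C (∏ j ∈ t \ {i}, m j) * a i,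
    Finset.prod_ne_zero_iff.mpr fun i _ => hm i, map_int_inj ?_⟩
  simp only [Polynomial.map_sum, Polynomial.map_mul, Polynomial.map_prod,
    Polynomial.map_intCast, map_C, eq_intCast, Polynomial.C_eq_intCast, ha]
  have key : ∀ i ∈ t, ((∏ j ∈ t \ {i}, m j : ℤ) * (m i : ℤ) : ℚ[X]) = ((∏ i ∈ t, m i : ℤ) : ℚ[X]) := by
    intro i hi
    have h2 : (∏ j ∈ t \ {i}, m j) * m i = ∏ i ∈ t, m i :=
      (Finset.prod_eq_prod_diff_singleton_mul hi _).symm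
    rw [← h2]
    push_cast
    ring
  have : (∑ i ∈ t, ((∏ j ∈ t \ {i}, m j : ℤ) : ℚ[X]) * (((m i : ℤ) : ℚ[X]) * μ i) *
        ∏ j ∈ t \ {i}, (s j).map (Int.castRingHom ℚ))
      = ∑ i ∈ t, ((∏ i ∈ t, m i : ℤ) : ℚ[X]) *
        (μ i * ∏ j ∈ t \ {i}, (s j).map (Int.castRingHom ℚ)) := by
    refine Finset.sum_congr rfl fun i hi => ?_
    rw [← key i hi]
    push_cast
    ring
  rw [this, ← Finset.mul_sum, hμ, mul_one]


/-- Proposition 3.3/Definition 3.2: let `Λ` be a module over `R(n) = ℤ[X]/(Xⁿ-1)` whose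
underlying abelian group is finitely generated and torsion-free, and for `d ∣ n` let
`Λ_d` be the kernel of multiplication by `Φ_d`. Then the `Λ_d` are independent (their sum
is direct) and the quotient `Λ⁰ = Λ / ⊕_{d ∣ n} Λ_d` is finite. -/
theorem lattice_isotypic_decomposition (n : ℕ) (hn : 1 ≤ n)
    (Λ : Type*) [AddCommGroup Λ]
    [Module (Polynomial ℤ ⧸ Ideal.span {(X : Polynomial ℤ) ^ n - 1}) Λ]
    [Module.Finite ℤ Λ] [NoZeroSMulDivisors ℤ Λ] :
    iSupIndep (fun d : {d : ℕ // d ∈ n.divisors} =>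
      LinearMap.ker (LinearMap.lsmul (Polynomial ℤ ⧸ Ideal.span {(X : Polynomial ℤ) ^ n - 1}) Λ
        (Ideal.Quotient.mk _ (cyclotomic d.1 ℤ)))) ∧
    Finite (Λ ⧸ ⨆ d : {d : ℕ // d ∈ n.divisors},
      LinearMap.ker (LinearMap.lsmul (Polynomial ℤ ⧸ Ideal.span {(X : Polynomial ℤ) ^ n - 1}) Λ
        (Ideal.Quotient.mk _ (cyclotomic d.1 ℤ)))) := by
  classical
  have hn0 : n ≠ 0 := by omega
  have hsmul_mul : ∀ (p p' : ℤ[X]) (x : Λ),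
      Ideal.Quotient.mk (Ideal.span {(X : ℤ[X]) ^ n - 1}) (p * p') • x
        = Ideal.Quotient.mk (Ideal.span {(X : ℤ[X]) ^ n - 1}) p •
          (Ideal.Quotient.mk (Ideal.span {(X : ℤ[X]) ^ n - 1}) p' • x) := by
    intro p p' x; rw [map_mul, mul_smul]
  have hXn : ∀ x : Λ,
      Ideal.Quotient.mk (Ideal.span {(X : ℤ[X]) ^ n - 1}) ((X : ℤ[X]) ^ n - 1) • x = 0 := by
    intro x
    rw [Ideal.Quotient.eq_zero_iff_mem.mpr (Ideal.subset_span (Set.mem_singleton _))]; exact zero_smul (Polynomial ℤ ⧸ Ideal.span {(X : Polynomial ℤ) ^ n - 1}) x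
  have hCm : ∀ (m : ℤ) (x : Λ),
      Ideal.Quotient.mk (Ideal.span {(X : ℤ[X]) ^ n - 1}) (C m : ℤ[X]) • x = m • x := by
    intro m x
    have h1 : (C m : ℤ[X]) = (m : ℤ[X]) := by simp
    rw [h1, map_intCast, Int.cast_smul_eq_zsmul]
  have hcop : ∀ {d e : ℕ}, d ≠ e →
      IsCoprime ((cyclotomic d ℤ).map (Int.castRingHom ℚ))
        ((cyclotomic e ℤ).map (Int.castRingHom ℚ)) := by
    intro d e hde
    simpa only [map_cyclotomic_int] using cyclotomic.isCoprime_rat hde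
  have hmemK : ∀ (d : ℕ) (x : Λ),
      x ∈ LinearMap.ker (LinearMap.lsmul (Polynomial ℤ ⧸ Ideal.span {(X : Polynomial ℤ) ^ n - 1}) Λ
        (Ideal.Quotient.mk _ (cyclotomic d ℤ)))
      ↔ Ideal.Quotient.mk (Ideal.span {(X : ℤ[X]) ^ n - 1}) (cyclotomic d ℤ) • x = 0 := by
    intro d x
    rw [LinearMap.mem_ker, LinearMap.lsmul_apply]
  constructor
  · -- independence
    intro i
    rw [Submodule.disjoint_def]
    intro x hx1 hx2
    have hx1' : Ideal.Quotient.mk (Ideal.span {(X : ℤ[X]) ^ n - 1}) (cyclotomic i.1 ℤ) • x = 0 :=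
      (hmemK i.1 x).mp hx1
    have hxP : Ideal.Quotient.mk (Ideal.span {(X : ℤ[X]) ^ n - 1})
        (∏ j ∈ n.divisors \ {i.1}, cyclotomic j ℤ) • x = 0 := by
      have hle : (⨆ j, ⨆ _ : j ≠ i, LinearMap.ker
            (LinearMap.lsmul (Polynomial ℤ ⧸ Ideal.span {(X : Polynomial ℤ) ^ n - 1}) Λ
              (Ideal.Quotient.mk _ (cyclotomic j.1 ℤ)))) ≤
          LinearMap.ker (LinearMap.lsmul (Polynomial ℤ ⧸ Ideal.span {(X : Polynomial ℤ) ^ n - 1}) Λ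
            (Ideal.Quotient.mk _ (∏ j ∈ n.divisors \ {i.1}, cyclotomic j ℤ))) := by
        refine iSup_le fun j => iSup_le fun hj => ?_
        intro y hy
        have hdvd : cyclotomic j.1 ℤ ∣ ∏ j ∈ n.divisors \ {i.1}, cyclotomic j ℤ := by
          refine Finset.dvd_prod_of_mem _ ?_
          rw [Finset.mem_sdiff, Finset.mem_singleton]
          exact ⟨j.2, fun h => hj (Subtype.ext h)⟩
        obtain ⟨c, hc⟩ := hdvd
        have hy' := (hmemK j.1 y).mp hy
        simp only [LinearMap.mem_ker, LinearMap.lsmul_apply]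
        rw [hc, mul_comm, hsmul_mul, hy', smul_zero]
      have := hle hx2
      simpa only [LinearMap.mem_ker, LinearMap.lsmul_apply] using this
    have hcp : IsCoprime ((cyclotomic i.1 ℤ).map (Int.castRingHom ℚ))
        ((∏ j ∈ n.divisors \ {i.1}, cyclotomic j ℤ).map (Int.castRingHom ℚ)) := by
      rw [Polynomial.map_prod]
      refine IsCoprime.prod_right fun j hj => ?_
      rw [Finset.mem_sdiff, Finset.mem_singleton] at hj
      exact hcop fun h => hj.2 h.symm
    obtain ⟨m, a, b, hm, hab⟩ := int_bezout _ _ hcp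
    have hmx : m • x = 0 := by
      have h1 : Ideal.Quotient.mk (Ideal.span {(X : ℤ[X]) ^ n - 1})
          (a * cyclotomic i.1 ℤ + b * ∏ j ∈ n.divisors \ {i.1}, cyclotomic j ℤ) • x
            = m • x := by
        rw [hab, hCm]
      rw [map_add, add_smul, hsmul_mul, hsmul_mul, hx1', hxP, smul_zero, smul_zero,
        add_zero] at h1
      exact h1.symm
    rcases smul_eq_zero.mp hmx with h | h
    · exact absurd h hm
    · exact h
  · -- finiteness
    set S : Submodule (Polynomial ℤ ⧸ Ideal.span {(X : Polynomial ℤ) ^ n - 1}) Λ :=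
      ⨆ d : {d : ℕ // d ∈ n.divisors},
        LinearMap.ker (LinearMap.lsmul (Polynomial ℤ ⧸ Ideal.span {(X : Polynomial ℤ) ^ n - 1}) Λ
          (Ideal.Quotient.mk _ (cyclotomic d.1 ℤ))) with hS
    have ht : n.divisors.Nonempty := ⟨1, Nat.one_mem_divisors.mpr hn0⟩
    have hpw : Pairwise (Function.onFun IsCoprime fun i : n.divisors =>
        (cyclotomic (i : ℕ) ℤ).map (Int.castRingHom ℚ)) := by
      intro i j hij
      exact hcop fun h => hij (Subtype.ext h)
    obtain ⟨N, b, hN, hb⟩ := int_bezout_family n.divisors ht (fun d => cyclotomic d ℤ) hpw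
    have hNx : ∀ x : Λ, N • x ∈ S := by
      intro x
      have h1 : N • x = ∑ d ∈ n.divisors,
          Ideal.Quotient.mk (Ideal.span {(X : ℤ[X]) ^ n - 1})
            (b d * ∏ j ∈ n.divisors \ {d}, cyclotomic j ℤ) • x := by
        rw [← hCm N x, ← hb, map_sum, Finset.sum_smul]
      rw [h1]
      refine Submodule.sum_mem _ fun d hd => ?_
      rw [hS]
      refine Submodule.mem_iSup_of_mem ⟨d, hd⟩ ?_
      rw [hmemK]
      rw [← hsmul_mul]
      have h2 : (∏ j ∈ n.divisors \ {d}, cyclotomic j ℤ) * cyclotomic d ℤ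
          = (X : ℤ[X]) ^ n - 1 := by
        rw [← Finset.prod_eq_prod_diff_singleton_mul hd,
          prod_cyclotomic_eq_X_pow_sub_one (by omega) ℤ]
      have h3 : cyclotomic d ℤ * (b d * ∏ j ∈ n.divisors \ {d}, cyclotomic j ℤ)
          = b d * ((X : ℤ[X]) ^ n - 1) := by
        rw [← h2]; ring
      rw [h3, hsmul_mul, hXn, smul_zero]
    have hfin : Module.Finite ℤ (Λ ⧸ S) :=
      Module.Finite.of_surjective (S.mkQ.toAddMonoidHom.toIntLinearMap)
        (Submodule.Quotient.mk_surjective S)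
    have htor : Module.IsTorsion ℤ (Λ ⧸ S) := by
      intro x
      obtain ⟨y, rfl⟩ := Submodule.Quotient.mk_surjective S x
      refine ⟨⟨N, mem_nonZeroDivisors_of_ne_zero hN⟩, ?_⟩
      rw [Submonoid.smul_def]
      have h4 : ((⟨N, mem_nonZeroDivisors_of_ne_zero hN⟩ : nonZeroDivisors ℤ) : ℤ) •
            (Submodule.Quotient.mk y : Λ ⧸ S)
          = Submodule.Quotient.mk (N • y) := (Submodule.Quotient.mk_smul S N y).symm
      rw [h4]
      exact (Submodule.Quotient.mk_eq_zero S).mpr (hNx y)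
    exact Module.finite_of_fg_torsion _ htor
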